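/- Let $x, y$ be coprime integers with $0 < y \le x$ (i.e., $x/y \ge 1$) and $x \ne y$. Then there exist a unique $n \ge 1$ and unique integers $a_1, \dots, a_n$ with all $a_i \le -2$ such that $\frac{x}{y - x} = a_1 - \cfrac{1}{a_2 - \cfrac{1}{\cdots - \cfrac{1}{a_n}}}$. -/

import Mathlib

/-- The negative continued fraction `[a₁,…,aₙ] = a₁ - 1/(a₂ - 1/(⋯ - 1/aₙ))`. -/
def negCF : List ℚ → ℚ
  | [] => 0
  | [a] => a
  | a :: b :: rest => a - 1 / negCF (b :: rest)

lemma negCF_map_cons (a b : ℤ) (r : List ℤ) :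
    negCF ((a :: b :: r).map (fun a => (a : ℚ))) =
      (a : ℚ) - 1 / negCF ((b :: r).map (fun a => (a : ℚ))) := rfl

lemma inv_bounds {t : ℚ} (ht : t < -1) : -1 < t⁻¹ ∧ t⁻¹ < 0 := by
  have ht0 : t < 0 := by linarith
  refine ⟨?_, inv_lt_zero.2 ht0⟩
  have h := mul_inv_cancel₀ (ne_of_lt ht0)
  nlinarith [inv_lt_zero.2 ht0]

lemma good_val_lt : ∀ l : List ℤ, l ≠ [] → (∀ a ∈ l, a ≤ -2) →
    negCF (l.map (fun a => (a : ℚ))) < -1 := by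
  intro l
  induction l with
  | nil => intro h; exact absurd rfl h
  | cons a rest ih =>
    intro _ h2
    have ha : a ≤ -2 := h2 a List.mem_cons_self
    have haq : (a : ℚ) ≤ -2 := by exact_mod_cast ha
    cases rest with
    | nil => simpa [negCF] using lt_of_le_of_lt haq (by norm_num)
    | cons b r =>
      have ht : negCF ((b :: r).map (fun a => (a : ℚ))) < -1 :=
        ih (by simp) (fun x hx => h2 x (List.mem_cons_of_mem _ hx))
      have hinv := (inv_bounds ht).1
      rw [negCF_map_cons, one_div]
      linarith

lemma key : ∀ d : ℕ, ∀ q : ℚ, q.den = d → q < -1 →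
    ∃! l : List ℤ, l ≠ [] ∧ (∀ a ∈ l, a ≤ -2) ∧
      negCF (l.map (fun a => (a : ℚ))) = q := by
  intro d
  induction d using Nat.strong_induction_on with
  | _ d ih =>
  intro q hd hq
  by_cases h1 : q.den = 1
  · -- q is an integer
    have hq' : ((q.num : ℚ)) = q := by
      conv_rhs => rw [← Rat.num_div_den q]
      rw [h1]; simp
    have hnum : q.num ≤ -2 := by
      have : (q.num : ℚ) < -1 := hq' ▸ hq
      have : q.num < -1 := by exact_mod_cast this
      omega
    refine ⟨[q.num], ⟨by simp, by simpa using hnum, by simpa [negCF] using hq'⟩, ?_⟩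
    rintro l ⟨hl0, hl2, hlval⟩
    match l with
    | [] => exact absurd rfl hl0
    | [a] =>
      have : (a : ℚ) = q := by simpa [negCF] using hlval
      have : (a : ℚ) = (q.num : ℚ) := by rw [this, hq']
      have : a = q.num := by exact_mod_cast this
      rw [this]
    | a :: b :: r =>
      exfalso
      have ht : negCF ((b :: r).map (fun a => (a : ℚ))) < -1 :=
        good_val_lt _ (by simp) (fun x hx => hl2 x (List.mem_cons_of_mem _ hx))
      rw [negCF_map_cons, one_div] at hlval
      obtain ⟨hinv1, hinv2⟩ := inv_bounds ht
      -- then a < q < a + 1, but q is an integer q.num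
      have h3 : (a : ℚ) < q := by linarith
      have h4 : q < (a : ℚ) + 1 := by linarith
      rw [← hq'] at h3 h4
      have h3' : a < q.num := by exact_mod_cast h3
      have h4' : q.num < a + 1 := by exact_mod_cast h4
      omega
  · -- q is not an integer
    set a : ℤ := ⌊q⌋ with hadef
    have hne : q ≠ (a : ℚ) := by
      intro h
      exact h1 (by rw [h]; exact Rat.den_intCast a)
    have hg0 : 0 < q - a := by
      rw [Int.self_sub_floor]
      exact Int.fract_pos.2 hne
    have hg1 : q - a < 1 := by
      rw [Int.self_sub_floor]
      exact Int.fract_lt_one q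
    set g : ℚ := q - a with hgdef
    have hgne : g ≠ 0 := ne_of_gt hg0
    set t : ℚ := -g⁻¹ with htdef
    have hginv : 1 < g⁻¹ := (one_lt_inv₀ hg0).2 hg1
    have ht : t < -1 := by rw [htdef]; linarith
    -- denominator bookkeeping
    have hden0 : (q.den : ℚ) ≠ 0 := by exact_mod_cast (Rat.den_pos q).ne'
    have hgq : g = Rat.divInt (q.num - a * q.den) (q.den : ℤ) := by
      rw [Rat.divInt_eq_div, hgdef]
      push_cast
      rw [eq_div_iff hden0]
      have : q * q.den = (q.num : ℚ) := Rat.mul_den_eq_num q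
      rw [← this]; ring
    have hgden : g.den ∣ q.den := by
      have := Rat.den_dvd (q.num - a * q.den) (q.den : ℤ)
      rw [← hgq] at this
      exact_mod_cast this
    have hgnum0 : 0 < g.num := Rat.num_pos.2 hg0
    have hgnumden : g.num < g.den := Rat.lt_one_iff_num_lt_denom.2 hg1
    have htden_dvd : (t.den : ℤ) ∣ g.num := by
      have h2 : t.den = (g⁻¹).den := by rw [htdef, Rat.neg_den]
      have h3 := Rat.den_dvd (g.den : ℤ) g.num
      rw [← Rat.inv_def g] at h3
      rw [h2]; exact h3
    have htden_lt : t.den < d := by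
      have h5 : (t.den : ℤ) ≤ g.num := Int.le_of_dvd hgnum0 htden_dvd
      have h6 : g.den ≤ q.den := Nat.le_of_dvd (Rat.den_pos q) hgden
      have : (t.den : ℤ) < q.den :=
        lt_of_le_of_lt h5 (lt_of_lt_of_le hgnumden (by exact_mod_cast h6))
      rw [← hd]; exact_mod_cast this
    obtain ⟨r, ⟨hr0, hr2, hrval⟩, hruniq⟩ := ih t.den htden_lt t rfl ht
    have ha2 : a ≤ -2 := by
      have h7 : (a : ℚ) ≤ q := Int.floor_le q
      have h8 : (a : ℚ) < -1 := lt_of_le_of_lt h7 hq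
      have : a < -1 := by exact_mod_cast h8
      omega
    have ht0' : t ≠ 0 := ne_of_lt (by linarith : t < 0)
    have hinvt : t⁻¹ = (a : ℚ) - q := by
      rw [htdef, inv_neg, inv_inv, hgdef]; ring
    refine ⟨a :: r, ⟨by simp, ?_, ?_⟩, ?_⟩
    · intro x hx
      rcases List.mem_cons.1 hx with h | h
      · rw [h]; exact ha2
      · exact hr2 x h
    · match r, hr0, hrval with
      | b :: r', _, hrval =>
        rw [negCF_map_cons, one_div, hrval, hinvt]; ring
    · rintro l ⟨hl0, hl2, hlval⟩
      match l with
      | [] => exact absurd rfl hl0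
      | [a'] =>
        exfalso
        have : (a' : ℚ) = q := by simpa [negCF] using hlval
        exact h1 (by rw [← this]; exact Rat.den_intCast a')
      | a' :: b' :: r' =>
        have ht' : negCF ((b' :: r').map (fun a => (a : ℚ))) < -1 :=
          good_val_lt _ (by simp) (fun x hx => hl2 x (List.mem_cons_of_mem _ hx))
        rw [negCF_map_cons, one_div] at hlval
        set t' := negCF ((b' :: r').map (fun a => (a : ℚ))) with ht'def
        have ht'0' : t' ≠ 0 := ne_of_lt (by linarith : t' < 0)
        obtain ⟨hinv1, hinv2⟩ := inv_bounds ht'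
        have h3 : (a' : ℚ) ≤ q := by linarith
        have h4 : q < (a' : ℚ) + 1 := by linarith
        have hfloor : ⌊q⌋ = a' := Int.floor_eq_iff.2 ⟨h3, by push_cast; linarith⟩
        have haa' : a' = a := by rw [hadef, hfloor]
        have hinvt' : t'⁻¹ = (a : ℚ) - q := by
          rw [← hlval, haa']; ring
        have htt' : t' = t := inv_injective (by rw [hinvt, hinvt'])
        have hr' : (b' :: r') = r := by
          apply hruniq
          exact ⟨by simp, fun x hx => hl2 x (List.mem_cons_of_mem _ hx), by rw [← ht'def, htt']⟩
        rw [haa', hr']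

/-- for coprime `0 < y ≤ x` with `x ≠ y`, the rational number `x/(y-x)` has a
unique negative continued fraction expansion `[a₁,…,aₙ]` with all `aᵢ ≤ -2` (uniqueness of
both the length `n ≥ 1` and the partial quotients, encoded as a unique nonempty list). -/
theorem stmt13 (x y : ℤ) (hy : 0 < y) (hyx : y ≤ x) (hne : x ≠ y) (hcop : IsCoprime x y) :
    ∃! l : List ℤ, l ≠ [] ∧ (∀ a ∈ l, a ≤ -2) ∧
      negCF (l.map (fun a => (a : ℚ))) = (x : ℚ) / ((y : ℚ) - (x : ℚ)) := by
  have hyltx : y < x := lt_of_le_of_ne hyx (Ne.symm hne)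
  have hq : (x : ℚ) / ((y : ℚ) - (x : ℚ)) < -1 := by
    have hb : (y : ℚ) - (x : ℚ) < 0 := by
      have : (y : ℚ) < (x : ℚ) := by exact_mod_cast hyltx
      linarith
    rw [div_lt_iff_of_neg hb]
    have : (0 : ℚ) < (y : ℚ) := by exact_mod_cast hy
    linarith
  exact key _ _ rfl hq
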